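/- Let G be a hyperbolic group (i.e., finitely generated with δ-hyperbolic Cayley graph) and let H ≤ G be a subgroup such that the inclusion of a Cayley graph of H into a Cayley graph of G (with respect to finite generating sets, H's generating set contained in G's) admits an injective Cannon-Thurston map in the strong sense, where H is assumed finitely generated and hyperbolic. Then H is quasiconvex in G. -/

import Mathlib

open Filter

/-- A graph is fine if for each edge `{a, b}` and each `n`, only finitely many
circuits (embedded cycles) of length at most `n` contain that edge. -/
def Fine {V : Type*} (G : SimpleGraph V) : Prop :=
  ∀ ⦃a b : V⦄, G.Adj a b → ∀ n : ℕ,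
    {w : G.Walk a a | w.IsCycle ∧ w.length ≤ n ∧ s(a, b) ∈ w.edges}.Finite

/-- The Gromov product in a graph, with respect to the path metric. -/
noncomputable def gpd {V : Type*} (X : SimpleGraph V) (p a b : V) : ℝ :=
  ((X.dist p a : ℝ) + (X.dist p b : ℝ) - (X.dist a b : ℝ)) / 2

/-- A graph is δ-hyperbolic (four-point inequality for its path metric). -/
def GraphHyp {V : Type*} (X : SimpleGraph V) (δ : ℝ) : Prop :=
  ∀ p a b c : V, min (gpd X p a b) (gpd X p b c) - δ ≤ gpd X p a c

/-- The Cayley graph of `G` with respect to `S`. -/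
def Cay (G : Type*) [Group G] (S : Finset G) : SimpleGraph G where
  Adj x y := x ≠ y ∧ (x⁻¹ * y ∈ S ∨ y⁻¹ * x ∈ S)
  symm := ⟨fun _ _ h => ⟨h.1.symm, h.2.symm⟩⟩
  loopless := ⟨fun _ h => h.1 rfl⟩

/-- `G` is a hyperbolic group: it has a finite generating set whose Cayley
graph is Gromov hyperbolic. -/
def IsHyperbolicGroup (G : Type*) [Group G] : Prop :=
  ∃ S : Finset G, Subgroup.closure (S : Set G) = ⊤ ∧ ∃ δ : ℝ, GraphHyp (Cay G S) δ

/-- `H` is quasiconvex in `G`: for any finite generating set, geodesics of the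
Cayley graph between elements of `H` stay uniformly close to `H`. -/
def QuasiconvexIn {G : Type*} [Group G] (H : Subgroup G) : Prop :=
  ∀ S : Finset G, Subgroup.closure (S : Set G) = ⊤ →
    ∃ K : ℝ, ∀ a b : G, a ∈ H → b ∈ H →
      ∀ w : (Cay G S).Walk a b, w.length = (Cay G S).dist a b →
        ∀ v ∈ w.support, ∃ h ∈ H, ((Cay G S).dist v h : ℝ) ≤ K

/-- The Cayley graph of a subgroup `H`, with respect to a set `T` of elements
of the ambient group generating `H`. -/
def CaySub {G : Type*} [Group G] (H : Subgroup G) (T : Finset G) :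
    SimpleGraph H where
  Adj x y := x ≠ y ∧ (((x : G)⁻¹ * y ∈ T) ∨ ((y : G)⁻¹ * x ∈ T))
  symm := ⟨fun _ _ h => ⟨h.1.symm, h.2.symm⟩⟩
  loopless := ⟨fun _ h => h.1 rfl⟩

/-- Cannon–Thurston map in the strong sense, for maps between graphs with their
path metrics. -/
def StrongCTGraph {VH VG : Type*} (Y : SimpleGraph VH) (X : SimpleGraph VG)
    (f : VH → VG) (y₀ : VH) (M : ℕ → ℝ) : Prop :=
  Tendsto M atTop atTop ∧
  ∀ (N : ℕ) (a b : VH) (w : Y.Walk a b), w.length = Y.dist a b →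
    (∀ y ∈ w.support, (N : ℝ) < (Y.dist y₀ y : ℝ)) →
    ∀ w' : X.Walk (f a) (f b), w'.length = X.dist (f a) (f b) →
      ∀ x ∈ w'.support, M N < (X.dist (f y₀) x : ℝ)

/-- A Gromov sequence in a graph. -/
def GSeqG {V : Type*} (X : SimpleGraph V) (p : V) (u : ℕ → V) : Prop :=
  Tendsto (fun q : ℕ × ℕ => gpd X p (u q.1) (u q.2)) atTop atTop

/-- Equivalence of Gromov sequences in a graph. -/
def GEquivG {V : Type*} (X : SimpleGraph V) (p : V) (u v : ℕ → V) : Prop :=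
  Tendsto (fun q : ℕ × ℕ => gpd X p (u q.1) (v q.2)) atTop atTop

namespace CTAux

section Graphs

variable {V : Type*} {X : SimpleGraph V} {a b p y y' x : V} {δ : ℝ}

/-- Infinite pigeonhole. -/
lemma infinite_fiber {α β : Type*} {s : Set α} (hs : s.Infinite) (f : α → β)
    {t : Set β} (ht : t.Finite) (hmap : ∀ a ∈ s, f a ∈ t) :
    ∃ b, {a ∈ s | f a = b}.Infinite := by
  by_contra hcon
  push_neg at hcon
  have : s ⊆ ⋃ b ∈ t, {a ∈ s | f a = b} := by
    intro a ha
    rw [Set.mem_iUnion]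
    exact ⟨f a, by rw [Set.mem_iUnion]; exact ⟨hmap a ha, ha, rfl⟩⟩
  exact hs (Set.Finite.subset (ht.biUnion (fun b _ => hcon b)) this)

/-- Discrete intermediate value property. -/
lemma nat_ivt (f : ℕ → ℕ) (d t J : ℕ) (hstep : ∀ i < d, f (i+1) ≤ f i + J)
    (h0 : f 0 ≤ t) (hd : t ≤ f d) : ∃ i ≤ d, f i ≤ t ∧ t ≤ f i + J := by
  classical
  set i := Nat.findGreatest (fun j => f j ≤ t) d with hi
  have hspec : f i ≤ t := Nat.findGreatest_spec (P := fun j => f j ≤ t) (Nat.zero_le d) h0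
  have hile : i ≤ d := Nat.findGreatest_le d
  rcases eq_or_lt_of_le hile with heq | hlt
  · exact ⟨i, hile, hspec, by rw [heq]; omega⟩
  · have hnot : ¬ (f (i+1) ≤ t) :=
      Nat.findGreatest_is_greatest (P := fun j => f j ≤ t) (n := d) (k := i + 1)
        (Nat.lt_succ_self i) (by omega)
    have := hstep i hlt
    exact ⟨i, hile, hspec, by omega⟩
lemma delta_nonneg [Nonempty V] {δ : ℝ} (hδ : GraphHyp X δ) : 0 ≤ δ := by
  obtain ⟨v⟩ := ‹Nonempty V›
  have := hδ v v v v
  simp [gpd] at this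
  linarith

lemma adj_dist_le_one (h : X.Adj a b) : X.dist a b ≤ 1 := by
  simpa using X.dist_le (SimpleGraph.Walk.cons h SimpleGraph.Walk.nil)

lemma dist_getVert_left (hc : X.Connected) (w : X.Walk a b) (i : ℕ) :
    X.dist a (w.getVert i) ≤ i := by
  induction w generalizing i with
  | nil => simp [SimpleGraph.Walk.getVert, SimpleGraph.dist_self]
  | @cons u c v h p ih =>
    cases i with
    | zero => simp [SimpleGraph.Walk.getVert_zero]
    | succ j =>
      have h1 : X.dist u (p.getVert j) ≤ X.dist u c + X.dist c (p.getVert j) :=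
        hc.dist_triangle
      have h2 : X.dist u c ≤ 1 := adj_dist_le_one h
      have h3 := ih j
      calc X.dist u ((SimpleGraph.Walk.cons h p).getVert (j+1))
          = X.dist u (p.getVert j) := by rw [SimpleGraph.Walk.getVert_cons_succ]
        _ ≤ 1 + j := by omega
        _ = j + 1 := by omega

lemma dist_getVert_right (w : X.Walk a b) (i : ℕ) :
    X.dist (w.getVert i) b ≤ w.length - i := by
  induction w generalizing i with
  | nil => simp [SimpleGraph.Walk.getVert]
  | @cons u c v h p ih =>
    cases i with
    | zero =>
      simpa [SimpleGraph.Walk.getVert_zero] using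
        X.dist_le (SimpleGraph.Walk.cons h p)
    | succ j =>
      have h3 := ih j
      rw [SimpleGraph.Walk.getVert_cons_succ]
      simpa [SimpleGraph.Walk.length_cons] using h3

lemma geodesic_getVert (hc : X.Connected) (w : X.Walk a b)
    (hw : w.length = X.dist a b) {i : ℕ} (hi : i ≤ w.length) :
    X.dist a (w.getVert i) = i ∧ X.dist (w.getVert i) b = w.length - i := by
  have h1 := dist_getVert_left hc w i
  have h2 := dist_getVert_right w i
  have h3 : X.dist a b ≤ X.dist a (w.getVert i) + X.dist (w.getVert i) b :=
    hc.dist_triangle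
  omega

lemma geodesic_support_split (hc : X.Connected) (w : X.Walk a b)
    (hw : w.length = X.dist a b) (hy : y ∈ w.support) :
    X.dist a y + X.dist y b = X.dist a b := by
  obtain ⟨i, rfl, hi⟩ := SimpleGraph.Walk.mem_support_iff_exists_getVert.mp hy
  have := geodesic_getVert hc w hw hi
  omega

lemma gpd_nonneg (hc : X.Connected) : 0 ≤ gpd X p a b := by
  have := hc.dist_triangle (u := a) (v := p) (w := b)
  have h2 : X.dist a p = X.dist p a := X.dist_comm
  unfold gpd
  have : (X.dist a b : ℝ) ≤ (X.dist p a : ℝ) + (X.dist p b : ℝ) := by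
    rw [← h2]; exact_mod_cast this
  linarith

lemma gpd_le_dist_left (hc : X.Connected) : gpd X p a b ≤ X.dist p a := by
  have := hc.dist_triangle (u := p) (v := a) (w := b)
  unfold gpd
  have : (X.dist p b : ℝ) ≤ (X.dist p a : ℝ) + (X.dist a b : ℝ) := by exact_mod_cast this
  linarith

lemma gpd_comm : gpd X p a b = gpd X p b a := by
  unfold gpd
  rw [X.dist_comm (u := a) (v := b)]
  ring_nf

lemma gpd_le_dist_right (hc : X.Connected) : gpd X p a b ≤ X.dist p b := by
  rw [gpd_comm]; exact gpd_le_dist_left hc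

lemma gpd_self : gpd X p a a = X.dist p a := by
  unfold gpd; rw [SimpleGraph.dist_self]; ring

lemma gpd_le_dist_support (hc : X.Connected) (w : X.Walk a b)
    (hw : w.length = X.dist a b) (hy : y ∈ w.support) :
    gpd X p a b ≤ X.dist p y := by
  have hsplit := geodesic_support_split hc w hw hy
  have h1 : X.dist p a ≤ X.dist p y + X.dist y a := hc.dist_triangle
  have h2 : X.dist p b ≤ X.dist p y + X.dist y b := hc.dist_triangle
  have h3 : X.dist y a = X.dist a y := X.dist_comm
  unfold gpd
  have c1 : (X.dist p a : ℝ) ≤ (X.dist p y : ℝ) + (X.dist a y : ℝ) := by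
    rw [← h3] at *; exact_mod_cast h1
  have c2 : (X.dist p b : ℝ) ≤ (X.dist p y : ℝ) + (X.dist y b : ℝ) := by exact_mod_cast h2
  have c3 : (X.dist a y : ℝ) + (X.dist y b : ℝ) = (X.dist a b : ℝ) := by exact_mod_cast hsplit
  linarith

/-- Lemma A : any point is near a geodesic, up to its Gromov product. -/
lemma near_geodesic (hc : X.Connected) (hδ : GraphHyp X δ) (w : X.Walk a b)
    (hw : w.length = X.dist a b) (p : V) :
    ∃ y ∈ w.support, (X.dist p y : ℝ) ≤ gpd X p a b + 2 * δ + 1 := by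
  set t : ℝ := gpd X a b p with ht
  have ht0 : 0 ≤ t := gpd_nonneg hc
  have htle : t ≤ (X.dist a b : ℝ) := gpd_le_dist_left hc
  set i : ℕ := ⌊t⌋₊ with hi
  have hilen : i ≤ w.length := by
    rw [hw]
    calc i ≤ ⌊((X.dist a b : ℕ) : ℝ)⌋₊ := Nat.floor_le_floor htle
      _ = X.dist a b := Nat.floor_natCast _
  have hit : (i : ℝ) ≤ t := Nat.floor_le ht0
  have hit1 : t < (i : ℝ) + 1 := Nat.lt_floor_add_one t
  set y : V := w.getVert i with hy
  have hmem : y ∈ w.support :=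
    SimpleGraph.Walk.mem_support_iff_exists_getVert.mpr ⟨i, rfl, hilen⟩
  obtain ⟨hd1, hd2⟩ := geodesic_getVert hc w hw hilen
  refine ⟨y, hmem, ?_⟩
  -- real versions of distances
  have hday : (X.dist a y : ℝ) = i := by exact_mod_cast hd1
  have hdyb : (X.dist y b : ℝ) = (w.length : ℝ) - i := by
    have : (X.dist y b : ℝ) = ((w.length - i : ℕ) : ℝ) := by exact_mod_cast hd2
    rw [this, Nat.cast_sub hilen]
  have hlen : (w.length : ℝ) = (X.dist a b : ℝ) := by exact_mod_cast hw
  have hya : (X.dist y a : ℝ) = (X.dist a y : ℝ) := by rw [X.dist_comm]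
  have hyp' : (X.dist y p : ℝ) = (X.dist p y : ℝ) := by rw [X.dist_comm]
  have hap : (X.dist a p : ℝ) = (X.dist p a : ℝ) := by rw [X.dist_comm]
  have hbp : (X.dist b p : ℝ) = (X.dist p b : ℝ) := by rw [X.dist_comm]
  have hpb : (X.dist p b : ℝ) = (X.dist b p : ℝ) := by rw [X.dist_comm]
  have hgyab : gpd X y a b = 0 := by
    unfold gpd; rw [hya, hday, hdyb, hlen]; ring
  have h4 := hδ y a p b
  rw [hgyab] at h4
  have e1 : gpd X y a p = ((X.dist y a : ℝ) + (X.dist y p : ℝ) - (X.dist a p : ℝ)) / 2 := rfl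
  have e2 : gpd X y p b = ((X.dist y p : ℝ) + (X.dist y b : ℝ) - (X.dist p b : ℝ)) / 2 := rfl
  have e3 : t = ((X.dist a b : ℝ) + (X.dist a p : ℝ) - (X.dist b p : ℝ)) / 2 := rfl
  have e4 : gpd X p a b = ((X.dist p a : ℝ) + (X.dist p b : ℝ) - (X.dist a b : ℝ)) / 2 := rfl
  rcases le_or_gt (gpd X y a p) (gpd X y p b) with hmin | hmin
  · rw [min_eq_left hmin] at h4
    -- gpd X y a p ≤ δ
    have : gpd X y a p ≤ δ := by linarith
    rw [e1] at this
    rw [e4]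
    linarith [hya, hday, hap, hbp, hit, hit1]
  · rw [min_eq_right hmin.le] at h4
    have : gpd X y p b ≤ δ := by linarith
    rw [e2] at this
    rw [e4]
    linarith [hdyb, hpb, hlen, hit, hit1]

/-- Distance between two points on a geodesic equals the difference of positions. -/
lemma geodesic_dist_two_support (hc : X.Connected) (w : X.Walk a b)
    (hw : w.length = X.dist a b) (hy : y ∈ w.support) (hy' : y' ∈ w.support) :
    X.dist y y' + X.dist a y = X.dist a y' ∨ X.dist y y' + X.dist a y' = X.dist a y := by
  obtain ⟨q, r, hqr⟩ := SimpleGraph.Walk.mem_support_iff_exists_append.mp hy'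
  have hlen : q.length + r.length = w.length := by rw [hqr, SimpleGraph.Walk.length_append]
  have l1 : X.dist a y' ≤ q.length := X.dist_le q
  have l2 : X.dist y' b ≤ r.length := X.dist_le r
  have ltri : X.dist a b ≤ X.dist a y' + X.dist y' b := hc.dist_triangle
  have hq : q.length = X.dist a y' := by omega
  have hr : r.length = X.dist y' b := by omega
  have hyq : y ∈ q.support ∨ y ∈ r.support := by
    rw [hqr] at hy
    exact (SimpleGraph.Walk.mem_support_append_iff q r).mp hy
  rcases hyq with hyq | hyq
  · left
    have := geodesic_support_split hc q hq hyq
    have hcm : X.dist y y' = X.dist y y' := rfl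
    omega
  · right
    have hsplit := geodesic_support_split hc r hr hyq
    have hw1 := geodesic_support_split hc w hw hy
    have hw2 := geodesic_support_split hc w hw hy'
    have hcm : X.dist y' y = X.dist y y' := X.dist_comm
    omega

/-- If every point of a chain from `a` to `b` has uniformly bounded Gromov
product with respect to `(a, b)`, then the chain passes near any point of any
geodesic from `a` to `b`. -/
lemma near_chain (hc : X.Connected) (hδ : GraphHyp X δ) (hδ0 : 0 ≤ δ)
    (w : X.Walk a b) (hw : w.length = X.dist a b) (hx : x ∈ w.support)
    (c : ℕ → V) (D : ℕ) (hc0 : c 0 = a) (hcD : c D = b)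
    (hstep : ∀ i < D, X.dist (c i) (c (i+1)) ≤ 1)
    (C : ℕ) (hC : ∀ i ≤ D, gpd X (c i) a b ≤ C) :
    ∃ i ≤ D, (X.dist x (c i) : ℝ) ≤ 3 * C + 6 * δ + 10 := by
  classical
  set c' : ℕ → V := fun i => c (min i D) with hcdef
  have hc'0 : c' 0 = a := by simp [hcdef, hc0]
  have hc'D : c' D = b := by simp [hcdef, hcD]
  set C' : ℕ := C + 2 * ⌈δ⌉₊ + 1 with hC'
  have hC'le : (C' : ℝ) ≤ (C : ℝ) + 2 * δ + 3 := by
    have h1 : (⌈δ⌉₊ : ℝ) ≤ δ + 1 := (Nat.ceil_lt_add_one hδ0).le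
    rw [hC']
    push_cast
    linarith
  have hC'ge : (C : ℝ) + 2 * δ + 1 ≤ C' := by
    have h1 : δ ≤ (⌈δ⌉₊ : ℝ) := Nat.le_ceil δ
    rw [hC']
    push_cast
    linarith
  -- choose near points on the geodesic for every chain point
  have hnear : ∀ i : ℕ, ∃ y ∈ w.support, X.dist (c' i) y ≤ C' := by
    intro i
    obtain ⟨y, hy, hyd⟩ := near_geodesic hc hδ w hw (c' i)
    refine ⟨y, hy, ?_⟩
    have h2 : gpd X (c' i) a b ≤ C := hC (min i D) (min_le_right i D)
    have : (X.dist (c' i) y : ℝ) ≤ (C' : ℝ) := le_trans hyd (by linarith)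
    exact_mod_cast this
  choose y hymem hyd using hnear
  set f : ℕ → ℕ := fun i => X.dist a (y i) with hf
  set t : ℕ := X.dist a x with hts
  -- basic endpoint bounds
  have hf0 : f 0 ≤ C' := by
    have h5 := hyd 0
    rw [hc'0] at h5
    have h6 : f 0 = X.dist a (y 0) := rfl
    omega
  have hfD : X.dist a b ≤ f D + C' := by
    have h1 : X.dist a b ≤ X.dist a (y D) + X.dist (y D) b := hc.dist_triangle
    have h2 : X.dist (y D) b ≤ C' := by
      have h5 := hyd D
      rw [hc'D] at h5
      have h7 : X.dist b (y D) = X.dist (y D) b := X.dist_comm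
      omega
    have h6 : f D = X.dist a (y D) := rfl
    omega
  have htle : t ≤ X.dist a b := by
    have := geodesic_support_split hc w hw hx; omega
  -- the target bound
  have hbound : ((3 * C' + 1 : ℕ) : ℝ) ≤ 3 * (C : ℝ) + 6 * δ + 10 := by
    have h1 : (⌈δ⌉₊ : ℝ) ≤ δ + 1 := (Nat.ceil_lt_add_one hδ0).le
    push_cast
    linarith
  -- helper to conclude from a near chain point
  have hconc : ∀ i : ℕ, X.dist x (c' i) ≤ 3 * C' + 1 →
      ∃ i ≤ D, (X.dist x (c i) : ℝ) ≤ 3 * (C : ℝ) + 6 * δ + 10 := by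
    intro i hxi
    exact ⟨min i D, min_le_right i D, le_trans (by exact_mod_cast hxi) hbound⟩
  -- dist from x to y i in terms of positions
  have hxy : ∀ i : ℕ, X.dist x (y i) ≤ Nat.dist (f i) t := by
    intro i
    have hsplit := geodesic_dist_two_support hc w hw (hymem i) hx
    have hc2 : X.dist x (y i) = X.dist (y i) x := X.dist_comm
    have h6 : f i = X.dist a (y i) := rfl
    rcases hsplit with h | h
    · simp only [Nat.dist]; omega
    · simp only [Nat.dist]; omega
  -- case analysis
  rcases le_or_gt t (f 0) with hcase | hcase
  · -- t ≤ f 0 ≤ C'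
    refine hconc 0 ?_
    have h1 : X.dist x (y 0) ≤ Nat.dist (f 0) t := hxy 0
    have h2 : Nat.dist (f 0) t ≤ C' := by simp only [Nat.dist]; omega
    have h3 : X.dist x (c' 0) ≤ X.dist x (y 0) + X.dist (y 0) (c' 0) := hc.dist_triangle
    have h4 : X.dist (y 0) (c' 0) = X.dist (c' 0) (y 0) := X.dist_comm
    have h5 := hyd 0
    omega
  rcases le_or_gt (f D) t with hcase2 | hcase2
  · refine hconc D ?_
    have h1 : X.dist x (y D) ≤ Nat.dist (f D) t := hxy D
    have h2 : Nat.dist (f D) t ≤ C' := by simp only [Nat.dist]; omega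
    have h3 : X.dist x (c' D) ≤ X.dist x (y D) + X.dist (y D) (c' D) := hc.dist_triangle
    have h4 : X.dist (y D) (c' D) = X.dist (c' D) (y D) := X.dist_comm
    have h5 := hyd D
    omega
  · -- interior crossing
    have hstep' : ∀ i < D, f (i+1) ≤ f i + (2 * C' + 1) := by
      intro i hi
      have h1 : X.dist a (y (i+1)) ≤ X.dist a (y i) + X.dist (y i) (y (i+1)) :=
        hc.dist_triangle
      have h2 : X.dist (y i) (y (i+1)) ≤
          X.dist (y i) (c' i) + X.dist (c' i) (y (i+1)) := hc.dist_triangle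
      have h3 : X.dist (c' i) (y (i+1)) ≤
          X.dist (c' i) (c' (i+1)) + X.dist (c' (i+1)) (y (i+1)) := hc.dist_triangle
      have h6 : X.dist (c' i) (c' (i+1)) ≤ 1 := by
        have h7 : min i D = i := min_eq_left (le_of_lt hi)
        have h8 : min (i+1) D = i + 1 := min_eq_left hi
        have := hstep i hi
        simp only [hcdef, h7, h8]
        exact this
      have h4 := hyd i
      have h5 := hyd (i+1)
      have h7 : X.dist (y i) (c' i) = X.dist (c' i) (y i) := X.dist_comm
      have h9 : f (i+1) = X.dist a (y (i+1)) := rfl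
      have h10 : f i = X.dist a (y i) := rfl
      omega
    obtain ⟨i, hiD, hfi, hfit⟩ := nat_ivt f D t (2 * C' + 1) hstep'
      (le_of_lt hcase) (le_of_lt hcase2)
    refine hconc i ?_
    have h1 : X.dist x (y i) ≤ Nat.dist (f i) t := hxy i
    have h2 : Nat.dist (f i) t ≤ 2 * C' + 1 := by simp only [Nat.dist]; omega
    have h3 : X.dist x (c' i) ≤ X.dist x (y i) + X.dist (y i) (c' i) := hc.dist_triangle
    have h4 : X.dist (y i) (c' i) = X.dist (c' i) (y i) := X.dist_comm
    have h5 := hyd i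
    have h8 : min i D = i := min_eq_left hiD
    simp only [hcdef, h8] at h3 h4 h5 ⊢
    omega
lemma tendsto_pair_comp {g : ℕ × ℕ → ℝ} (hg : Tendsto g atTop atTop) {φ : ℕ → ℕ}
    (hφ : StrictMono φ) :
    Tendsto (fun q : ℕ × ℕ => g (φ q.1, φ q.2)) atTop atTop := by
  have h1 : Tendsto (Prod.map φ φ) (atTop : Filter (ℕ × ℕ)) (atTop : Filter (ℕ × ℕ)) := by
    rw [← prod_atTop_atTop_eq]
    exact hφ.tendsto_atTop.prodMap hφ.tendsto_atTop
  exact hg.comp h1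

lemma extraction_step (hc : X.Connected) (hδ : GraphHyp X δ)
    (hball : ∀ n : ℕ, {v : V | X.dist p v ≤ n}.Finite)
    (y : ℕ → V) (hy : Tendsto (fun n => X.dist p (y n)) atTop atTop)
    (L : ℕ) (A : Set ℕ) (hA : A.Infinite) :
    ∃ B, B ⊆ A ∧ B.Infinite ∧
      ∀ i ∈ B, ∀ j ∈ B, (L : ℝ) - δ ≤ gpd X p (y i) (y j) := by
  classical
  obtain ⟨N, hN⟩ := (tendsto_atTop_atTop.mp hy) L
  set A' : Set ℕ := A ∩ {i | L ≤ X.dist p (y i)} with hA'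
  have hA'inf : A'.Infinite := by
    have h1 : (A \ {i | i < N}).Infinite := hA.diff (Set.finite_Iio N)
    apply Set.Infinite.mono ?_ h1
    intro i hi
    exact ⟨hi.1, hN i (by simpa using Nat.le_of_not_lt (by simpa using hi.2))⟩
  set w : ∀ i : ℕ, X.Walk p (y i) :=
    fun i => ((hc.preconnected p (y i)).exists_walk_length_eq_dist).choose with hwdef
  have hwlen : ∀ i, (w i).length = X.dist p (y i) :=
    fun i => ((hc.preconnected p (y i)).exists_walk_length_eq_dist).choose_spec
  set q : ℕ → V := fun i => (w i).getVert L with hq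
  have hqd : ∀ i ∈ A', X.dist p (q i) = L ∧ X.dist (q i) (y i) = X.dist p (y i) - L := by
    intro i hi
    have hiL : L ≤ (w i).length := by rw [hwlen i]; exact hi.2
    have := geodesic_getVert hc (w i) (hwlen i) hiL
    rw [hwlen i] at this
    exact this
  obtain ⟨v0, hv0⟩ := infinite_fiber hA'inf q (hball L)
    (fun i hi => by simp only [Set.mem_setOf_eq]; exact (hqd i hi).1.le)
  refine ⟨{i ∈ A' | q i = v0}, fun i hi => hi.1.1, hv0, ?_⟩
  rintro i ⟨hiA', hiq⟩ j ⟨hjA', hjq⟩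
  have hgi : gpd X p (y i) v0 = L := by
    obtain ⟨h1, h2⟩ := hqd i hiA'
    rw [← hiq]
    unfold gpd
    rw [X.dist_comm (u := y i) (v := q i), h1, h2]
    have hle : L ≤ X.dist p (y i) := hiA'.2
    rw [Nat.cast_sub hle]
    ring
  have hgj : gpd X p v0 (y j) = L := by
    obtain ⟨h1, h2⟩ := hqd j hjA'
    rw [← hjq]
    unfold gpd
    rw [h1, h2]
    have hle : L ≤ X.dist p (y j) := hjA'.2
    rw [Nat.cast_sub hle]
    ring
  have h4 := hδ p (y i) v0 (y j)
  rw [hgi, hgj, min_self] at h4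
  exact h4

lemma gromov_subseq (hc : X.Connected) (hδ : GraphHyp X δ)
    (hball : ∀ n : ℕ, {v : V | X.dist p v ≤ n}.Finite)
    (y : ℕ → V) (hy : Tendsto (fun n => X.dist p (y n)) atTop atTop) :
    ∃ φ : ℕ → ℕ, StrictMono φ ∧
      Tendsto (fun q : ℕ × ℕ => gpd X p (y (φ q.1)) (y (φ q.2))) atTop atTop := by
  classical
  have step := extraction_step hc hδ hball y hy
  -- nested infinite sets
  let Aseq : ℕ → Set ℕ := fun L =>
    Nat.rec Set.univ (fun L A => if h : A.Infinite then (step (L+1) A h).choose else Set.univ) L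
  have hA0 : Aseq 0 = Set.univ := rfl
  have hAsucc : ∀ L, Aseq (L+1) =
      if h : (Aseq L).Infinite then (step (L+1) (Aseq L) h).choose else Set.univ := fun L => rfl
  have hAinf : ∀ L, (Aseq L).Infinite := by
    intro L
    induction L with
    | zero => exact Set.infinite_univ
    | succ L ih =>
      rw [hAsucc L, dif_pos ih]
      exact (step (L+1) (Aseq L) ih).choose_spec.2.1
  have hAsub : ∀ L, Aseq (L+1) ⊆ Aseq L := by
    intro L
    rw [hAsucc L, dif_pos (hAinf L)]
    exact (step (L+1) (Aseq L) (hAinf L)).choose_spec.1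
  have hAgpd : ∀ L, ∀ i ∈ Aseq (L+1), ∀ j ∈ Aseq (L+1),
      ((L:ℝ) + 1) - δ ≤ gpd X p (y i) (y j) := by
    intro L
    have h := (step (L+1) (Aseq L) (hAinf L)).choose_spec.2.2
    rw [hAsucc L, dif_pos (hAinf L)]
    intro i hi j hj
    have := h i hi j hj
    push_cast at this ⊢
    linarith
  have hchain : ∀ {m n : ℕ}, m ≤ n → Aseq n ⊆ Aseq m := by
    intro m n hmn
    induction hmn with
    | refl => exact fun _ h => h
    | step h ih => exact fun x hx => ih (hAsub _ hx)
  -- the diagonal subsequence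
  let φ : ℕ → ℕ := fun n =>
    Nat.rec ((hAinf 0).nonempty.choose)
      (fun n x => ((hAinf (n+1)).exists_gt x).choose) n
  have hφsucc : ∀ n, φ (n+1) = ((hAinf (n+1)).exists_gt (φ n)).choose := fun n => rfl
  have hφmem : ∀ n, φ n ∈ Aseq n := by
    intro n
    cases n with
    | zero => exact (hAinf 0).nonempty.choose_spec
    | succ n => rw [hφsucc n]; exact ((hAinf (n+1)).exists_gt (φ n)).choose_spec.1
  have hφmono : StrictMono φ := by
    apply strictMono_nat_of_lt_succ
    intro n
    rw [hφsucc n]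
    exact ((hAinf (n+1)).exists_gt (φ n)).choose_spec.2
  refine ⟨φ, hφmono, ?_⟩
  rw [tendsto_atTop_atTop]
  intro C
  obtain ⟨m, hm⟩ : ∃ m : ℕ, C + δ ≤ (m : ℝ) + 1 := by
    obtain ⟨m, hm⟩ := exists_nat_ge (C + δ)
    exact ⟨m, by linarith⟩
  refine ⟨(m+1, m+1), ?_⟩
  rintro ⟨i, j⟩ ⟨hi, hj⟩
  simp only at hi hj
  have hmi : φ i ∈ Aseq (m+1) := hchain hi (hφmem i)
  have hmj : φ j ∈ Aseq (m+1) := hchain hj (hφmem j)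
  have := hAgpd m (φ i) hmi (φ j) hmj
  linarith

end Graphs

section Cayley

variable {G : Type*} [Group G] {S T : Finset G} {H : Subgroup G}

lemma cay_adj {x y : G} : (Cay G S).Adj x y ↔ x ≠ y ∧ (x⁻¹ * y ∈ S ∨ y⁻¹ * x ∈ S) :=
  Iff.rfl

lemma caySub_adj {x y : H} :
    (CaySub H T).Adj x y ↔ x ≠ y ∧ (((x : G)⁻¹ * y ∈ T) ∨ ((y : G)⁻¹ * x ∈ T)) :=
  Iff.rfl

/-- Left translation as a graph automorphism of a Cayley graph. -/
def cayMulLeft (S : Finset G) (g : G) : Cay G S ≃g Cay G S where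
  toEquiv := Equiv.mulLeft g
  map_rel_iff' := by
    intro x y
    simp only [Equiv.coe_mulLeft, cay_adj]
    constructor
    · rintro ⟨h1, h2⟩
      refine ⟨fun h => h1 (by rw [h]), ?_⟩
      simpa [mul_assoc, mul_inv_rev] using h2
    · rintro ⟨h1, h2⟩
      refine ⟨fun h => h1 (mul_left_cancel h), ?_⟩
      simpa [mul_assoc, mul_inv_rev] using h2

@[simp] lemma cayMulLeft_apply (g a : G) : cayMulLeft S g a = g * a := rfl

/-- Left translation as a graph automorphism of a subgroup Cayley graph. -/
def caySubMulLeft (H : Subgroup G) (T : Finset G) (g : H) : CaySub H T ≃g CaySub H T where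
  toEquiv := Equiv.mulLeft g
  map_rel_iff' := by
    intro x y
    simp only [Equiv.coe_mulLeft, caySub_adj]
    constructor
    · rintro ⟨h1, h2⟩
      refine ⟨fun h => h1 (by rw [h]), ?_⟩
      simpa [Subgroup.coe_mul, mul_assoc, mul_inv_rev] using h2
    · rintro ⟨h1, h2⟩
      refine ⟨fun h => h1 (mul_left_cancel h), ?_⟩
      simpa [Subgroup.coe_mul, mul_assoc, mul_inv_rev] using h2

lemma iso_dist_le {V W : Type*} {A : SimpleGraph V} {B : SimpleGraph W}
    (e : A ≃g B) (a b : V) (hr : A.Reachable a b) :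
    B.dist (e a) (e b) ≤ A.dist a b := by
  obtain ⟨w, hw⟩ := hr.exists_walk_length_eq_dist
  calc B.dist (e a) (e b) ≤ (w.map e.toHom).length := B.dist_le _
    _ = A.dist a b := by rw [SimpleGraph.Walk.length_map, hw]

@[simp] lemma caySubMulLeft_apply (g a : H) : caySubMulLeft H T g a = g * a := rfl

/-- Graph isomorphisms preserve distances (stated for connected source). -/
lemma iso_dist_eq {V W : Type*} {A : SimpleGraph V} {B : SimpleGraph W}
    (e : A ≃g B) (hc : A.Connected) (a b : V) :
    B.dist (e a) (e b) = A.dist a b := by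
  have h2 := iso_dist_le e a b (hc.preconnected a b)
  have h3 := iso_dist_le e.symm (e a) (e b) (((hc.preconnected a b)).map e.toHom)
  simp only [RelIso.symm_apply_apply] at h3
  omega

lemma cay_dist_mulLeft (hc : (Cay G S).Connected) (g x y : G) :
    (Cay G S).dist (g * x) (g * y) = (Cay G S).dist x y :=
  iso_dist_eq (cayMulLeft S g) hc x y

lemma caySub_dist_mulLeft (hc : (CaySub H T).Connected) (g x y : H) :
    (CaySub H T).dist (g * x) (g * y) = (CaySub H T).dist x y :=
  iso_dist_eq (caySubMulLeft H T g) hc x y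

/-- The Cayley graph of a generating set is connected. -/
lemma cay_connected (hSgen : Subgroup.closure (S : Set G) = ⊤) :
    (Cay G S).Connected := by
  have key : ∀ g : G, g ∈ Subgroup.closure (S : Set G) → (Cay G S).Reachable 1 g := by
    intro g hg
    induction hg using Subgroup.closure_induction with
    | mem s hs =>
      by_cases h1 : s = 1
      · rw [h1]
      · exact SimpleGraph.Adj.reachable ⟨fun h => h1 h.symm, Or.inl (by simpa using hs)⟩
    | one => rfl
    | mul x y _ _ hx hy =>
      have h2 := hy.map (cayMulLeft S x).toHom
      exact hx.trans (by simpa using h2)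
    | inv x _ hx =>
      have h2 := hx.map (cayMulLeft S x⁻¹).toHom
      have h3 : (Cay G S).Reachable x⁻¹ 1 := by simpa using h2
      exact h3.symm
  have pre : (Cay G S).Preconnected := fun x y =>
    ((key x (hSgen ▸ Subgroup.mem_top x)).symm.trans (key y (hSgen ▸ Subgroup.mem_top y)))
  exact SimpleGraph.Connected.mk pre

lemma caySub_connected (hTgen : Subgroup.closure (T : Set G) = H) :
    (CaySub H T).Connected := by
  have hsub : ∀ g (hg : g ∈ Subgroup.closure (T : Set G)), g ∈ H := fun g hg => hTgen ▸ hg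
  have key : ∀ g (hg : g ∈ Subgroup.closure (T : Set G)),
      (CaySub H T).Reachable 1 ⟨g, hsub g hg⟩ := by
    intro g hg
    induction hg using Subgroup.closure_induction with
    | mem s hs =>
      by_cases h1 : (⟨s, hsub s (Subgroup.subset_closure hs)⟩ : H) = 1
      · rw [h1]
      · exact SimpleGraph.Adj.reachable ⟨fun h => h1 h.symm, Or.inl (by simpa using hs)⟩
    | one =>
      have : (⟨(1:G), hsub 1 (Subgroup.one_mem _)⟩ : H) = 1 := rfl
      rw [this]
    | mul x y hx' hy' hx hy =>
      have hx2 : (⟨x * y, hsub _ (Subgroup.mul_mem _ hx' hy')⟩ : H)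
          = (⟨x, hsub x hx'⟩ : H) * ⟨y, hsub y hy'⟩ := rfl
      rw [hx2]
      have h2 := hy.map (caySubMulLeft H T ⟨x, hsub x hx'⟩).toHom
      exact hx.trans (by simpa using h2)
    | inv x hx' hx =>
      have h2 := hx.map (caySubMulLeft H T (⟨x, hsub x hx'⟩ : H)⁻¹).toHom
      have h3 : (CaySub H T).Reachable (⟨x, hsub x hx'⟩ : H)⁻¹ 1 := by simpa using h2
      have hx3 : (⟨x⁻¹, hsub _ (Subgroup.inv_mem _ hx')⟩ : H) = (⟨x, hsub x hx'⟩ : H)⁻¹ := rfl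
      rw [hx3]
      exact h3.symm
  have pre : (CaySub H T).Preconnected := by
    rintro ⟨x, hx⟩ ⟨y, hy⟩
    have kx := key x (hTgen.symm ▸ hx)
    have ky := key y (hTgen.symm ▸ hy)
    exact kx.symm.trans ky
  exact SimpleGraph.Connected.mk pre

/-- The inclusion of the subgroup Cayley graph into the ambient Cayley graph. -/
def inclHom (H : Subgroup G) (S T : Finset G) (hTS : (T : Set G) ⊆ (S : Set G)) :
    CaySub H T →g Cay G S where
  toFun := fun h => (h : G)
  map_rel' := by
    rintro x y ⟨h1, h2⟩
    exact ⟨fun e => h1 (Subtype.coe_injective e), h2.imp (fun ht => hTS ht) (fun ht => hTS ht)⟩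

lemma incl_adj (hTS : (T : Set G) ⊆ (S : Set G)) {x y : H}
    (h : (CaySub H T).Adj x y) : (Cay G S).Adj (x : G) (y : G) :=
  ⟨fun e => h.1 (Subtype.coe_injective e), h.2.imp (fun ht => hTS ht) (fun ht => hTS ht)⟩

lemma incl_dist_le (hTS : (T : Set G) ⊆ (S : Set G)) {a b : H}
    (hr : (CaySub H T).Reachable a b) :
    (Cay G S).dist (a : G) (b : G) ≤ (CaySub H T).dist a b := by
  obtain ⟨w, hw⟩ := hr.exists_walk_length_eq_dist
  calc (Cay G S).dist (a : G) (b : G) ≤ (w.map (inclHom H S T hTS)).length :=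
        (Cay G S).dist_le _
    _ = (CaySub H T).dist a b := by rw [SimpleGraph.Walk.length_map, hw]

/-- Balls in the subgroup Cayley graph are finite. -/
lemma caySub_ball_finite (hc : (CaySub H T).Connected) (n : ℕ) :
    {h : H | (CaySub H T).dist 1 h ≤ n}.Finite := by
  induction n with
  | zero =>
    apply Set.Finite.subset (Set.finite_singleton (1 : H))
    intro h hh
    simp only [Set.mem_setOf_eq, Nat.le_zero] at hh
    exact (hc.dist_eq_zero_iff.mp hh).symm ▸ rfl
  | succ n ih =>
    have hnbr : ∀ y : H, {h : H | (CaySub H T).Adj y h}.Finite := by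
      intro y
      have : {h : H | (CaySub H T).Adj y h} ⊆
          (fun h : H => (h : G)) ⁻¹' ((fun t => (y : G) * t) '' (T : Set G) ∪
            (fun t => (y : G) * t⁻¹) '' (T : Set G)) := by
        rintro h ⟨_, h2 | h2⟩
        · exact Or.inl ⟨(y : G)⁻¹ * h, h2, by group⟩
        · exact Or.inr ⟨(h : G)⁻¹ * y, h2, by group⟩
      exact Set.Finite.preimage (Set.injOn_of_injective Subtype.coe_injective)
        (((T.finite_toSet.image _).union (T.finite_toSet.image _)).subset
          (fun x hx => hx))  |>.subset this
    have hsub : {h : H | (CaySub H T).dist 1 h ≤ n + 1} ⊆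
        {h : H | (CaySub H T).dist 1 h ≤ n} ∪
          ⋃ y ∈ {h : H | (CaySub H T).dist 1 h ≤ n}, {h : H | (CaySub H T).Adj y h} := by
      intro h hh
      simp only [Set.mem_setOf_eq] at hh
      rcases Nat.lt_or_ge ((CaySub H T).dist 1 h) (n+1) with hlt | hge
      · exact Or.inl (Nat.lt_succ_iff.mp hlt)
      · have heq : (CaySub H T).dist 1 h = n + 1 := le_antisymm hh hge
        obtain ⟨w, hw⟩ := (hc.preconnected 1 h).exists_walk_length_eq_dist
        have hlen : w.length = n + 1 := by rw [hw, heq]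
        have hn : n ≤ w.length := by omega
        have hd := (geodesic_getVert hc w hw hn).1
        have hadj : (CaySub H T).Adj (w.getVert n) (w.getVert (n+1)) :=
          w.adj_getVert_succ (by omega)
        have hgl : w.getVert (n+1) = h := by
          rw [← hlen]; exact w.getVert_length
        refine Or.inr ?_
        rw [Set.mem_iUnion]
        refine ⟨w.getVert n, ?_⟩
        rw [Set.mem_iUnion]
        refine ⟨by simp only [Set.mem_setOf_eq]; omega, ?_⟩
        show (CaySub H T).Adj (w.getVert n) h
        convert hadj using 1
        exact hgl.symm
    exact Set.Finite.subset (ih.union (ih.biUnion (fun y _ => hnbr y))) hsub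


end Cayley

end CTAux

/-- a hyperbolic subgroup of a hyperbolic group whose Cayley graph
inclusion admits an injective Cannon–Thurston map in the strong sense is
quasiconvex. -/
theorem quasiconvex_of_injective_strongCT {G : Type*} [Group G]
    (S : Finset G) (hSgen : Subgroup.closure (S : Set G) = ⊤)
    (δ : ℝ) (hG : GraphHyp (Cay G S) δ)
    (H : Subgroup G) (T : Finset G) (hTS : (T : Set G) ⊆ (S : Set G))
    (hTgen : Subgroup.closure (T : Set G) = H)
    (δ' : ℝ) (hH : GraphHyp (CaySub H T) δ')
    (M : ℕ → ℝ)
    (hCT : StrongCTGraph (CaySub H T) (Cay G S) (fun h : H => (h : G)) 1 M)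
    (hinj : ∀ u v : ℕ → H, GSeqG (CaySub H T) 1 u → GSeqG (CaySub H T) 1 v →
      GEquivG (Cay G S) 1 (fun n => (u n : G)) (fun n => (v n : G)) →
        GEquivG (CaySub H T) 1 u v) :
    ∃ K : ℝ, ∀ a b : G, a ∈ H → b ∈ H →
      ∀ w : (Cay G S).Walk a b, w.length = (Cay G S).dist a b →
        ∀ x ∈ w.support, ∃ h ∈ H, ((Cay G S).dist x h : ℝ) ≤ K := by
  classical
  by_contra hcon
  haveI : Nonempty G := ⟨1⟩
  have Xc : (Cay G S).Connected := CTAux.cay_connected hSgen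
  have Yc : (CaySub H T).Connected := CTAux.caySub_connected hTgen
  have hδ0 : (0:ℝ) ≤ δ := CTAux.delta_nonneg hG
  have hδ'0 : (0:ℝ) ≤ δ' := CTAux.delta_nonneg hH
  -- extract the non-quasiconvexity data
  have hdata : ∀ n : ℕ, ∃ a b : G, a ∈ H ∧ b ∈ H ∧ ∃ w : (Cay G S).Walk a b,
      w.length = (Cay G S).dist a b ∧ ∃ x ∈ w.support,
        ∀ h ∈ H, (n : ℝ) < ((Cay G S).dist x h : ℝ) := by
    intro n
    have h1 := not_exists.mp hcon (n : ℝ)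
    push_neg at h1
    obtain ⟨a, b, ha, hb, w, hw, x, hx, hfar⟩ := h1
    exact ⟨a, b, ha, hb, w, hw, x, hx, hfar⟩
  choose a b ha hb w hw x hx hfar using hdata
  set A : ℕ → H := fun n => ⟨a n, ha n⟩ with hA
  set B : ℕ → H := fun n => ⟨b n, hb n⟩ with hB
  -- geodesics in the subgroup Cayley graph
  have hσex : ∀ n, ∃ σ : (CaySub H T).Walk (A n) (B n),
      σ.length = (CaySub H T).dist (A n) (B n) :=
    fun n => (Yc.preconnected _ _).exists_walk_length_eq_dist
  choose σ hσ using hσex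
  -- points of maximal Gromov product along the geodesics
  have hparg : ∀ n, ∃ pm, pm ∈ (σ n).support ∧ ∀ q ∈ (σ n).support,
      gpd (Cay G S) (q : G) (a n) (b n) ≤ gpd (Cay G S) (pm : G) (a n) (b n) := by
    intro n
    obtain ⟨pm, hpm1, hpm2⟩ := Finset.exists_max_image ((σ n).support.toFinset)
      (fun q : H => gpd (Cay G S) (q : G) (a n) (b n))
      ⟨A n, List.mem_toFinset.mpr ((σ n).start_mem_support)⟩
    exact ⟨pm, List.mem_toFinset.mp hpm1, fun q hq => hpm2 q (List.mem_toFinset.mpr hq)⟩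
  choose p hpmem hpmax using hparg
  set Q : ℕ → ℝ := fun n => gpd (Cay G S) ((p n : H) : G) (a n) (b n) with hQdef
  -- the maximal Gromov product tends to infinity
  have hQ : Tendsto Q atTop atTop := by
    rw [tendsto_atTop_atTop]
    intro Creal
    obtain ⟨C, hCge⟩ := exists_nat_ge Creal
    obtain ⟨N1, hN1⟩ := exists_nat_ge (3 * (C:ℝ) + 6 * δ + 10)
    refine ⟨N1 + 1, fun n hn => ?_⟩
    by_contra hQn
    push_neg at hQn
    have hQC : Q n < (C : ℝ) := lt_of_lt_of_le hQn hCge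
    have hprod : ∀ i ≤ (σ n).length,
        gpd (Cay G S) ((((σ n).getVert i : H)) : G) (a n) (b n) ≤ C := by
      intro i hi
      have hmem : (σ n).getVert i ∈ (σ n).support :=
        SimpleGraph.Walk.mem_support_iff_exists_getVert.mpr ⟨i, rfl, hi⟩
      have := hpmax n _ hmem
      linarith
    have hchain := CTAux.near_chain Xc hG hδ0 (w n) (hw n) (hx n)
      (fun i => (((σ n).getVert i : H) : G)) ((σ n).length
      ) (by show (((σ n).getVert 0 : H) : G) = a n
            rw [SimpleGraph.Walk.getVert_zero])
      (by show (((σ n).getVert ((σ n).length) : H) : G) = b n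
          rw [SimpleGraph.Walk.getVert_length])
      (fun i hi => CTAux.adj_dist_le_one
        (CTAux.incl_adj hTS ((σ n).adj_getVert_succ hi)))
      C hprod
    obtain ⟨i, hiD, hnear⟩ := hchain
    have hfar2 := hfar n (((σ n).getVert i : H) : G) ((σ n).getVert i).2
    have hcast : (N1 : ℝ) + 1 ≤ (n : ℝ) := by exact_mod_cast hn
    linarith
  -- translated sequences
  set u : ℕ → H := fun n => (p n)⁻¹ * A n with hu
  set v : ℕ → H := fun n => (p n)⁻¹ * B n with hv
  have hu_mul : ∀ n, (p n) * (u n) = A n := fun n => by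
    rw [hu]; simp [mul_inv_cancel_left]
  have hv_mul : ∀ n, (p n) * (v n) = B n := fun n => by
    rw [hv]; simp [mul_inv_cancel_left]
  -- distance identities
  have hdY1u : ∀ n, (CaySub H T).dist 1 (u n) = (CaySub H T).dist (p n) (A n) := by
    intro n
    rw [← CTAux.caySub_dist_mulLeft Yc (p n) 1 (u n), mul_one, hu_mul n]
  have hdY1v : ∀ n, (CaySub H T).dist 1 (v n) = (CaySub H T).dist (p n) (B n) := by
    intro n
    rw [← CTAux.caySub_dist_mulLeft Yc (p n) 1 (v n), mul_one, hv_mul n]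
  have hdYuv : ∀ n, (CaySub H T).dist (u n) (v n) = (CaySub H T).dist (A n) (B n) := by
    intro n
    rw [← CTAux.caySub_dist_mulLeft Yc (p n) (u n) (v n), hu_mul n, hv_mul n]
  have hcu : ∀ n, ((p n : H) : G) * ((u n : H) : G) = a n := by
    intro n
    have := congrArg (Subtype.val) (hu_mul n)
    simpa using this
  have hcv : ∀ n, ((p n : H) : G) * ((v n : H) : G) = b n := by
    intro n
    have := congrArg (Subtype.val) (hv_mul n)
    simpa using this
  have hdX1u : ∀ n, (Cay G S).dist 1 ((u n : H) : G) = (Cay G S).dist ((p n : H) : G) (a n) := by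
    intro n
    rw [← CTAux.cay_dist_mulLeft Xc ((p n : H) : G) 1 ((u n : H) : G), mul_one, hcu n]
  have hdX1v : ∀ n, (Cay G S).dist 1 ((v n : H) : G) = (Cay G S).dist ((p n : H) : G) (b n) := by
    intro n
    rw [← CTAux.cay_dist_mulLeft Xc ((p n : H) : G) 1 ((v n : H) : G), mul_one, hcv n]
  have hdXuv : ∀ n, (Cay G S).dist ((u n : H) : G) ((v n : H) : G) = (Cay G S).dist (a n) (b n) := by
    intro n
    rw [← CTAux.cay_dist_mulLeft Xc ((p n : H) : G) ((u n : H) : G) ((v n : H) : G), hcu n, hcv n]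
  -- the Y-Gromov product of (u n, v n) at 1 vanishes
  have hdiag0 : ∀ n, gpd (CaySub H T) 1 (u n) (v n) = 0 := by
    intro n
    have hsplit := CTAux.geodesic_support_split Yc (σ n) (hσ n) (hpmem n)
    have hcm : (CaySub H T).dist (p n) (A n) = (CaySub H T).dist (A n) (p n) :=
      SimpleGraph.dist_comm
    unfold gpd
    rw [hdY1u n, hdY1v n, hdYuv n]
    have hr : ((CaySub H T).dist (p n) (A n) : ℝ) + ((CaySub H T).dist (p n) (B n) : ℝ)
        = ((CaySub H T).dist (A n) (B n) : ℝ) := by exact_mod_cast by omega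
    linarith
  -- the X-Gromov product of the images at 1 equals Q n
  have hgpdX : ∀ n, gpd (Cay G S) 1 ((u n : H) : G) ((v n : H) : G) = Q n := by
    intro n
    unfold gpd
    rw [hdX1u n, hdX1v n, hdXuv n, hQdef]
    rfl
  -- distances from 1 to u n, v n tend to infinity (in Y)
  have hQle_u : ∀ n, Q n ≤ ((CaySub H T).dist 1 (u n) : ℝ) := by
    intro n
    have h1 : gpd (Cay G S) 1 ((u n : H) : G) ((v n : H) : G)
        ≤ (Cay G S).dist 1 ((u n : H) : G) := CTAux.gpd_le_dist_left Xc
    have h2 : (Cay G S).dist (((1:H) : H) : G) ((u n : H) : G) ≤ (CaySub H T).dist 1 (u n) :=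
      CTAux.incl_dist_le hTS (Yc.preconnected 1 (u n))
    have h3 : (((1:H)) : G) = (1 : G) := rfl
    rw [h3] at h2
    have h2' : ((Cay G S).dist 1 ((u n : H) : G) : ℝ) ≤ ((CaySub H T).dist 1 (u n) : ℝ) := by
      exact_mod_cast h2
    rw [hgpdX n] at h1
    linarith
  have hQle_v : ∀ n, Q n ≤ ((CaySub H T).dist 1 (v n) : ℝ) := by
    intro n
    have h1 : gpd (Cay G S) 1 ((u n : H) : G) ((v n : H) : G)
        ≤ (Cay G S).dist 1 ((v n : H) : G) := CTAux.gpd_le_dist_right Xc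
    have h2 : (Cay G S).dist (((1:H)) : G) ((v n : H) : G) ≤ (CaySub H T).dist 1 (v n) :=
      CTAux.incl_dist_le hTS (Yc.preconnected 1 (v n))
    have h3 : (((1:H)) : G) = (1 : G) := rfl
    rw [h3] at h2
    have h2' : ((Cay G S).dist 1 ((v n : H) : G) : ℝ) ≤ ((CaySub H T).dist 1 (v n) : ℝ) := by
      exact_mod_cast h2
    rw [hgpdX n] at h1
    linarith
  have hquY : Tendsto (fun n => (CaySub H T).dist 1 (u n)) atTop atTop := by
    rw [tendsto_atTop_atTop]
    intro bb
    obtain ⟨N, hN⟩ := tendsto_atTop_atTop.mp hQ (bb : ℝ)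
    exact ⟨N, fun n hn => by exact_mod_cast (le_trans (hN n hn) (hQle_u n))⟩
  have hqvY : Tendsto (fun n => (CaySub H T).dist 1 (v n)) atTop atTop := by
    rw [tendsto_atTop_atTop]
    intro bb
    obtain ⟨N, hN⟩ := tendsto_atTop_atTop.mp hQ (bb : ℝ)
    exact ⟨N, fun n hn => by exact_mod_cast (le_trans (hN n hn) (hQle_v n))⟩
  -- extraction of common Gromov subsequences
  obtain ⟨φ₁, hφ₁, hu1⟩ := CTAux.gromov_subseq Yc hH (CTAux.caySub_ball_finite Yc) u hquY
  have hqv1 : Tendsto (fun n => (CaySub H T).dist 1 (v (φ₁ n))) atTop atTop :=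
    hqvY.comp hφ₁.tendsto_atTop
  obtain ⟨φ₂, hφ₂, hv2⟩ := CTAux.gromov_subseq Yc hH (CTAux.caySub_ball_finite Yc)
    (fun n => v (φ₁ n)) hqv1
  set φ : ℕ → ℕ := fun n => φ₁ (φ₂ n) with hφdef
  have hφ : StrictMono φ := hφ₁.comp hφ₂
  set U : ℕ → H := fun n => u (φ n) with hU
  set Vv : ℕ → H := fun n => v (φ n) with hV
  have hGSU : GSeqG (CaySub H T) 1 U := CTAux.tendsto_pair_comp hu1 hφ₂
  have hGSV : GSeqG (CaySub H T) 1 Vv := hv2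
  -- transfer of Gromov products from Y to X via the Cannon-Thurston hypothesis
  have keyB : ∀ N : ℕ, ∀ aa bb : H, (N:ℝ) < gpd (CaySub H T) 1 aa bb →
      M N - (2*δ+1) ≤ gpd (Cay G S) 1 (aa : G) (bb : G) := by
    intro N aa bb hab
    obtain ⟨ω, hω⟩ := (Yc.preconnected aa bb).exists_walk_length_eq_dist
    have havoid : ∀ yy ∈ ω.support, (N:ℝ) < ((CaySub H T).dist 1 yy : ℝ) := by
      intro yy hyy
      have := CTAux.gpd_le_dist_support Yc ω hω hyy (p := 1)
      linarith
    obtain ⟨γ, hγ⟩ := (Xc.preconnected (aa : G) (bb : G)).exists_walk_length_eq_dist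
    have hCT2 := hCT.2 N aa bb ω hω havoid γ hγ
    obtain ⟨yy, hymem, hyd⟩ := CTAux.near_geodesic Xc hG γ hγ (1 : G)
    have hMlt : M N < ((Cay G S).dist (1:G) yy : ℝ) := hCT2 yy hymem
    linarith
  -- the image sequences are equivalent in X
  have g2 : Tendsto (fun q : ℕ × ℕ =>
      gpd (Cay G S) 1 ((U q.2 : H) : G) ((Vv q.2 : H) : G)) atTop atTop := by
    have hQφ : Tendsto (fun n => Q (φ n)) atTop atTop := hQ.comp hφ.tendsto_atTop
    have hsnd : Tendsto (fun q : ℕ × ℕ => q.2) (atTop : Filter (ℕ × ℕ)) atTop := by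
      rw [← prod_atTop_atTop_eq]; exact tendsto_snd
    exact Tendsto.congr (fun q => (hgpdX (φ q.2)).symm) (hQφ.comp hsnd)
  have g1 : Tendsto (fun q : ℕ × ℕ =>
      gpd (Cay G S) 1 ((U q.1 : H) : G) ((U q.2 : H) : G)) atTop atTop := by
    rw [tendsto_atTop_atTop]
    intro Cr
    obtain ⟨N0, hN0⟩ := tendsto_atTop_atTop.mp hCT.1 (Cr + (2*δ+1))
    have hMN : Cr + (2*δ+1) ≤ M N0 := hN0 N0 le_rfl
    obtain ⟨q0, hq0⟩ := tendsto_atTop_atTop.mp hGSU ((N0 : ℝ) + 1)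
    refine ⟨q0, fun q hq => ?_⟩
    have h1 : (N0 : ℝ) < gpd (CaySub H T) 1 (U q.1) (U q.2) := by
      have := hq0 q hq; linarith
    have := keyB N0 (U q.1) (U q.2) h1
    linarith
  have hEqX : GEquivG (Cay G S) 1 (fun n => ((U n : H) : G)) (fun n => ((Vv n : H) : G)) := by
    unfold GEquivG
    rw [tendsto_atTop_atTop]
    intro Cr
    obtain ⟨q1, hq1⟩ := tendsto_atTop_atTop.mp g1 (Cr + δ)
    obtain ⟨q2, hq2⟩ := tendsto_atTop_atTop.mp g2 (Cr + δ)
    refine ⟨(max q1.1 q2.1, max q1.2 q2.2), fun q hq => ?_⟩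
    have hqq1 : q1 ≤ q := by
      constructor
      · exact le_trans (le_max_left _ _) hq.1
      · exact le_trans (le_max_left _ _) hq.2
    have hqq2 : q2 ≤ q := by
      constructor
      · exact le_trans (le_max_right _ _) hq.1
      · exact le_trans (le_max_right _ _) hq.2
    have h1 := hq1 q hqq1
    have h2 := hq2 q hqq2
    have h4 := hG 1 ((U q.1 : H) : G) ((U q.2 : H) : G) ((Vv q.2 : H) : G)
    rcases le_total (gpd (Cay G S) 1 ((U q.1 : H) : G) ((U q.2 : H) : G))
      (gpd (Cay G S) 1 ((U q.2 : H) : G) ((Vv q.2 : H) : G)) with hmin | hmin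
    · rw [min_eq_left hmin] at h4; linarith
    · rw [min_eq_right hmin] at h4; linarith
  -- injectivity of the Cannon-Thurston map gives equivalence in Y: contradiction
  have hEqY := hinj U Vv hGSU hGSV hEqX
  obtain ⟨q0, hq0⟩ := tendsto_atTop_atTop.mp hEqY 1
  have hqle : q0 ≤ (max q0.1 q0.2, max q0.1 q0.2) := by
    constructor
    · exact le_max_left _ _
    · exact le_max_right _ _
  have hfin := hq0 (max q0.1 q0.2, max q0.1 q0.2) hqle
  have hzero := hdiag0 (φ (max q0.1 q0.2))
  rw [hU, hV] at hfin
  simp only at hfin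
  rw [hzero] at hfin
  linarith
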